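/- Let a be an odd natural number. Then the sum over b from 0 to a of binomial((a−1)/2, b) · (−1)^b / (2b+1) equals √π · ((a−1)/2)! / (2 · Γ(a/2 + 1)). -/

import Mathlib

open Finset

private lemma aux_sum (m : ℕ) : ∀ x : ℝ, 0 < x →
    ∑ b ∈ range (m + 1), (m.choose b : ℝ) * (-1) ^ b / (x + b)
      = (m.factorial : ℝ) / ∏ j ∈ range (m + 1), (x + j) := by
  induction m with
  | zero => intro x hx; simp
  | succ m ih =>
    intro x hx
    have hsplit : ∑ b ∈ range (m + 2), ((m+1).choose b : ℝ) * (-1) ^ b / (x + b)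
        = (∑ b ∈ range (m + 1), (m.choose b : ℝ) * (-1) ^ b / (x + b))
          - ∑ b ∈ range (m + 1), (m.choose b : ℝ) * (-1) ^ b / ((x + 1) + b) := by
      rw [Finset.sum_range_succ' (fun b => ((m+1).choose b : ℝ) * (-1) ^ b / (x + b)) (m+1)]
      have h1 : ∀ k ∈ range (m+1), ((m+1).choose (k+1) : ℝ) * (-1) ^ (k+1) / (x + ((k:ℕ)+1 : ℕ))
          = (m.choose (k+1) : ℝ) * (-1) ^ (k+1) / (x + ((k:ℕ)+1 : ℕ))
            - (m.choose k : ℝ) * (-1) ^ k / ((x+1) + k) := by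
        intro k hk
        rw [Nat.choose_succ_succ]
        have hxk : (x : ℝ) + ((k:ℕ)+1 : ℕ) ≠ 0 := by push_cast; positivity
        have hxk' : (x : ℝ) + 1 + k ≠ 0 := by positivity
        push_cast
        field_simp
        ring
      rw [Finset.sum_congr rfl h1, Finset.sum_sub_distrib]
      have h2 : (∑ k ∈ range (m+1), (m.choose (k+1) : ℝ) * (-1) ^ (k+1) / (x + ((k:ℕ)+1 : ℕ)))
          + ((m+1).choose 0 : ℝ) * (-1) ^ 0 / (x + (0:ℕ))
          = ∑ b ∈ range (m + 1), (m.choose b : ℝ) * (-1) ^ b / (x + b) := by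
        rw [Finset.sum_range_succ (fun k => (m.choose (k+1) : ℝ) * (-1) ^ (k+1) / (x + ((k:ℕ)+1 : ℕ))) m]
        rw [Finset.sum_range_succ' (fun b => (m.choose b : ℝ) * (-1) ^ b / (x + b)) m]
        simp [Nat.choose_succ_self]
      rw [sub_add_eq_add_sub, h2]
    rw [hsplit, ih x hx, ih (x+1) (by linarith)]
    set P1 := ∏ j ∈ range (m + 1), (x + (j:ℕ)) with hP1
    set P2 := ∏ j ∈ range (m + 1), ((x+1) + (j:ℕ)) with hP2
    have h1 : (0:ℝ) < P1 := Finset.prod_pos (fun j _ => by positivity)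
    have h2 : (0:ℝ) < P2 := Finset.prod_pos (fun j _ => by positivity)
    have hprod1 : ∏ j ∈ range (m + 2), (x + (j:ℕ)) = x * P2 := by
      have e : P2 = ∏ j ∈ range (m+1), (x + ((j:ℕ)+1 : ℕ)) := by
        rw [hP2]; exact Finset.prod_congr rfl (fun j _ => by push_cast; ring)
      rw [Finset.prod_range_succ' (fun j => x + ((j:ℕ):ℝ)), e]
      norm_num [mul_comm]
    have hprod2 : ∏ j ∈ range (m + 2), (x + (j:ℕ)) = (x + ((m:ℝ)+1)) * P1 := by
      rw [Finset.prod_range_succ]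
      push_cast
      ring
    have hrel : x * P2 = (x + ((m:ℝ)+1)) * P1 := by rw [← hprod1, hprod2]
    rw [hprod1]
    have hfact : (((m+1).factorial : ℕ) : ℝ) = ((m:ℝ)+1) * (m.factorial : ℝ) := by
      rw [Nat.factorial_succ]; push_cast; ring
    rw [hfact]
    rw [div_sub_div _ _ h1.ne' h2.ne', div_eq_div_iff (mul_pos h1 h2).ne' (mul_pos hx h2).ne']
    linear_combination ((m.factorial : ℝ) * P2) * hrel


private lemma aux_gamma : ∀ n : ℕ, Real.Gamma (1/2 + n) = Real.sqrt Real.pi * ∏ j ∈ range n, ((1:ℝ)/2 + j) := by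
  intro n
  induction n with
  | zero => norm_num [show ((2:ℝ))⁻¹ = 1/2 by norm_num, Real.Gamma_one_half_eq]
  | succ n ih =>
    have h : (1:ℝ)/2 + (n+1 : ℕ) = (1/2 + n) + 1 := by push_cast; ring
    have hne : (1:ℝ)/2 + n ≠ 0 := by positivity
    rw [h, Real.Gamma_add_one hne, ih, Finset.prod_range_succ]
    ring

theorem stmt_3 (a : ℕ) (ha : Odd a) :
    ∑ b ∈ Finset.range (a + 1), (((a - 1) / 2 : ℕ).choose b : ℝ) * (-1) ^ b / (2 * b + 1)
      = Real.sqrt Real.pi * ((((a - 1) / 2 : ℕ).factorial : ℝ))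
        / (2 * Real.Gamma ((a : ℝ) / 2 + 1)) := by
  obtain ⟨m, hm⟩ := ha
  have hm2 : (a - 1) / 2 = m := by omega
  have ha' : a = 2 * m + 1 := by omega
  subst ha'
  rw [hm2]
  have htrunc : ∑ b ∈ Finset.range (2*m+1 + 1), (m.choose b : ℝ) * (-1) ^ b / (2 * b + 1)
      = ∑ b ∈ Finset.range (m + 1), (m.choose b : ℝ) * (-1) ^ b / (2 * b + 1) := by
    symm
    apply Finset.sum_subset
    · apply Finset.range_subset_range.2; omega
    · intro b _ hb
      have : m < b := by simp at hb ⊢; omega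
      rw [Nat.choose_eq_zero_of_lt this]
      simp
  rw [htrunc]
  have hstep : ∀ b ∈ range (m+1), (m.choose b : ℝ) * (-1) ^ b / (2 * b + 1)
      = (m.choose b : ℝ) * (-1) ^ b / ((1:ℝ)/2 + b) * (1/2) := by
    intro b _
    have : (2 * (b:ℝ) + 1) ≠ 0 := by positivity
    have : ((1:ℝ)/2 + b) ≠ 0 := by positivity
    field_simp
    ring
  rw [Finset.sum_congr rfl hstep, ← Finset.sum_mul]
  rw [aux_sum m (1/2) (by norm_num)]
  have hG : ((2*m+1 : ℕ) : ℝ) / 2 + 1 = 1/2 + ((m+1 : ℕ) : ℝ) := by push_cast; ring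
  rw [hG, aux_gamma (m+1)]
  have hP : (0:ℝ) < ∏ j ∈ range (m + 1), ((1:ℝ)/2 + j) := Finset.prod_pos (fun j _ => by positivity)
  have hpi : (0:ℝ) < Real.sqrt Real.pi := Real.sqrt_pos.2 Real.pi_pos
  field_simp
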